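/- arXiv:1301.1717 — 6 statements merged into one kernel-verified Lean document; each statement's English description precedes it below -/
import Mathlib

section
/- Let G be a group acting on a sample space Ω_X and on an action space Ω_A, let γ : G → Ω_A → ℝ be an invariant loss and δ : Ω_X → Ω_A an equivariant decision rule. Fix x ∈ Ω_X, let S = {u ∈ Ω_X : ∃ g ∈ G, x = g • u} be the orbit of x, and let s : Ω_X → G be a (measurable) selection satisfying x = s(u) • u for every u ∈ S. Then γ(1, δ(u)) = γ(s(u), δ(x)) for every u ∈ S, and hence for every measure κ on Ω_X concentrated on S (i.e. κ(Ω_X \ S) = 0) one has ∫ γ(1, δ(u)) dκ(u) = ∫ γ(s(u), δ(x)) dκ(u). Thus the conditional risk of an equivariant rule is determined by the fiducial distribution, namely the law of u ↦ s(u) under κ. -/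
open MeasureTheory

/-- The conditional risk of an equivariant rule under an invariant loss is determined by
the fiducial distribution: on the orbit of the observation `x`, the loss at the unit equals
the loss of the action `δ x` against the fiducial variable `s u`, and hence the integrals
agree for any measure concentrated on the orbit. -/
theorem risk_determined_by_fiducial {G ΩX ΩA : Type*} [Group G]
    [MulAction G ΩX] [MulAction G ΩA] [MeasurableSpace ΩX]
    (γ : G → ΩA → ℝ) (δ : ΩX → ΩA)
    (hγ : ∀ (g θ : G) (a : ΩA), γ (g * θ) (g • a) = γ θ a)
    (hδ : ∀ (g : G) (x : ΩX), δ (g • x) = g • δ x)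
    (x : ΩX) (S : Set ΩX) (hS : S = {u : ΩX | ∃ g : G, x = g • u})
    (s : ΩX → G) (hs : ∀ u ∈ S, x = s u • u) :
    (∀ u ∈ S, γ 1 (δ u) = γ (s u) (δ x)) ∧
      ∀ κ : Measure ΩX, κ Sᶜ = 0 →
        ∫ u, γ 1 (δ u) ∂κ = ∫ u, γ (s u) (δ x) ∂κ := by
  have key : ∀ u ∈ S, γ 1 (δ u) = γ (s u) (δ x) := by
    intro u hu
    have hx := hs u hu
    rw [hx, hδ]
    have := hγ (s u) 1 (δ u)
    simpa using this.symm
  refine ⟨key, fun κ hκ => ?_⟩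
  refine integral_congr_ae ?_
  filter_upwards [measure_eq_zero_iff_ae_notMem.mp hκ] with u hu
  exact key u (by simpa using hu)
end

section
/- Let G be a set with a binary operation ∗, a two-sided identity e (e ∗ g = g ∗ e = g for all g), and left division: for all x, u ∈ G there is a unique element d(x,u) ∈ G with d(x,u) ∗ u = x. Let γ : G → G → ℝ satisfy the invariance γ(g ∗ θ, g ∗ a) = γ(θ, a) for all g, θ, a ∈ G, and let δ : G → G satisfy the equivariance δ(g ∗ x) = g ∗ δ(x) for all g, x ∈ G. Then (i) γ(θ, δ(θ ∗ u)) = γ(e, δ(u)) for all θ, u ∈ G, and (ii) γ(e, δ(u)) = γ(d(x,u), δ(x)) for all x, u ∈ G. Consequently, for any probability measure μ on G the risk ∫ γ(θ, δ(θ ∗ u)) dμ(u) does not depend on θ and equals ∫ γ(d(x,u), δ(x)) dμ(u) for every x ∈ G, i.e. the risk is determined by the fiducial distribution (the law of u ↦ d(x,u) under μ). -/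
open MeasureTheory

/-- In a quasigroup (with unit) model, the risk of an equivariant rule under an invariant loss
does not depend on the parameter and is determined by the fiducial distribution, the law of
`u ↦ d x u` where `d x u` is the unique solution `θ` of `θ ∗ u = x`. -/
theorem quasigroup_risk_fiducial {G : Type*} [MeasurableSpace G]
    (op : G → G → G) (e : G) (d : G → G → G)
    (he : ∀ g : G, op e g = g ∧ op g e = g)
    (hd : ∀ x u : G, op (d x u) u = x)
    (hd_unique : ∀ x u c : G, op c u = x → c = d x u)
    (γ : G → G → ℝ) (δ : G → G)
    (hγ : ∀ g θ a : G, γ (op g θ) (op g a) = γ θ a)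
    (hδ : ∀ g x : G, δ (op g x) = op g (δ x)) :
    (∀ θ u : G, γ θ (δ (op θ u)) = γ e (δ u)) ∧
    (∀ x u : G, γ e (δ u) = γ (d x u) (δ x)) ∧
    ∀ (μ : Measure G), IsProbabilityMeasure μ →
      ∀ θ x : G, ∫ u, γ θ (δ (op θ u)) ∂μ = ∫ u, γ (d x u) (δ x) ∂μ := by
  have h1 : ∀ θ u : G, γ θ (δ (op θ u)) = γ e (δ u) := by
    intro θ u
    have := hγ θ e (δ u)
    rw [(he θ).2] at this
    rw [hδ, this]
  have h2 : ∀ x u : G, γ e (δ u) = γ (d x u) (δ x) := by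
    intro x u
    have := hγ (d x u) e (δ u)
    rw [(he (d x u)).2, ← hδ, hd] at this
    exact this.symm
  refine ⟨h1, h2, fun μ _ θ x => ?_⟩
  exact integral_congr_ae (Filter.Eventually.of_forall fun u => (h1 θ u).trans (h2 x u))
end

section
/- Let U, Θ, X be nonempty sets and let χ : U × Θ → X be a function such that for every fixed θ ∈ Θ the map u ↦ χ(u, θ) is a bijection from U to X, and for every fixed u ∈ U the map θ ↦ χ(u, θ) is a bijection from Θ to X. Fix u₀ ∈ U and θ₀ ∈ Θ and set e = χ(u₀, θ₀). Then there exist bijections f : U → X and h : Θ → X and a binary operation ∗ on X such that: (i) χ(u, θ) = h(θ) ∗ f(u) for all u ∈ U, θ ∈ Θ; (ii) e is a two-sided identity for ∗ (e ∗ x = x ∗ e = x for all x ∈ X); and (iii) for all a, b ∈ X each of the equations a ∗ x = b and x ∗ a = b has a unique solution x ∈ X. That is, after a change of variables, any simple pivotal relation is given by multiplication in a loop (a quasigroup with a unit). -/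
/-- Any simple pivotal relation is, after a change of variables, given by multiplication in a
loop (a quasigroup with a two-sided unit). -/
theorem simple_pivotal_is_loop {U Θ X : Type*} [Nonempty U] [Nonempty Θ] [Nonempty X]
    (χ : U → Θ → X)
    (hbij_u : ∀ θ : Θ, Function.Bijective fun u : U => χ u θ)
    (hbij_θ : ∀ u : U, Function.Bijective fun θ : Θ => χ u θ)
    (u₀ : U) (θ₀ : Θ) :
    ∃ (f : U → X) (h : Θ → X) (op : X → X → X),
      Function.Bijective f ∧ Function.Bijective h ∧
      (∀ (u : U) (θ : Θ), χ u θ = op (h θ) (f u)) ∧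
      (∀ x : X, op (χ u₀ θ₀) x = x ∧ op x (χ u₀ θ₀) = x) ∧
      (∀ a b : X, ∃! x : X, op a x = b) ∧
      (∀ a b : X, ∃! x : X, op x a = b) := by
  set F := Equiv.ofBijective _ (hbij_u θ₀) with hF
  set H := Equiv.ofBijective _ (hbij_θ u₀) with hH
  refine ⟨F, H, fun a b => χ (F.symm b) (H.symm a), F.bijective, H.bijective, ?_, ?_, ?_, ?_⟩
  · intro u θ
    simp
  · intro x
    have h1 : H.symm (χ u₀ θ₀) = θ₀ := H.symm_apply_eq.mpr rfl
    have h2 : F.symm (χ u₀ θ₀) = u₀ := F.symm_apply_eq.mpr rfl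
    constructor
    · show χ (F.symm x) (H.symm (χ u₀ θ₀)) = x
      rw [h1]; exact F.apply_symm_apply x
    · show χ (F.symm (χ u₀ θ₀)) (H.symm x) = x
      rw [h2]; exact H.apply_symm_apply x
  · intro a b
    set G := Equiv.ofBijective _ (hbij_u (H.symm a)) with hG
    refine ⟨F (G.symm b), ?_, ?_⟩
    · show χ (F.symm (F (G.symm b))) (H.symm a) = b
      rw [F.symm_apply_apply]
      exact G.apply_symm_apply b
    · intro y hy
      have h1 : G (F.symm y) = b := hy
      have h2 : G.symm b = F.symm y := G.symm_apply_eq.mpr h1.symm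
      rw [h2, F.apply_symm_apply]
  · intro a b
    set G := Equiv.ofBijective _ (hbij_θ (F.symm a)) with hG
    refine ⟨H (G.symm b), ?_, ?_⟩
    · show χ (F.symm a) (H.symm (H (G.symm b))) = b
      rw [H.symm_apply_apply]
      exact G.apply_symm_apply b
    · intro y hy
      have h1 : G (H.symm y) = b := hy
      have h2 : G.symm b = H.symm y := G.symm_apply_eq.mpr h1.symm
      rw [h2, H.apply_symm_apply]
end

section
/- Let n ≥ 1 be an integer and x > 0, and let F be the pushforward of the Gamma(shape n, rate n) distribution under u ↦ x/u (the fiducial distribution of the scale parameter given observed mean x in the exponential model). Then the function a ↦ ∫ (ln θ − ln a)² dF(θ) defined for a ∈ (0, ∞) attains its unique minimum at a = x · exp(ln n − ψ(n)), where ψ is the digamma function. That is, the optimal equivariant estimator of the exponential scale parameter under the loss γ(θ, a) = |ln θ − ln a|² is δ(x) = x · exp(ln n − ψ(n)). -/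
open MeasureTheory ProbabilityTheory
open MeasureTheory Real Set ProbabilityTheory
open scoped ENNReal NNReal

-- psi lemma
lemma psi_eq (s : ℝ) (hs : 0 < s) :
    HasDerivAt (fun t : ℝ => Real.log (Real.Gamma t))
      ((∫ t in Ioi (0:ℝ), t ^ (s - 1) * (Real.log t * Real.exp (-t))) / Real.Gamma s) s := by
  have hsc : (0:ℝ) < (s : ℂ).re := by simpa using hs
  have h1 : HasDerivAt Complex.GammaIntegral
      (∫ t : ℝ in Ioi 0, (t:ℂ) ^ ((s:ℂ) - 1) * (Real.log t * Real.exp (-t))) (s:ℂ) :=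
    Complex.hasDerivAt_GammaIntegral hsc
  have hIeq : (∫ t : ℝ in Ioi 0, (t:ℂ) ^ ((s:ℂ) - 1) * (Real.log t * Real.exp (-t)))
      = ((∫ t in Ioi (0:ℝ), t ^ (s - 1) * (Real.log t * Real.exp (-t)) : ℝ) : ℂ) := by
    have := integral_ofReal (f := fun t : ℝ => t ^ (s - 1) * (Real.log t * Real.exp (-t)))
      (μ := volume.restrict (Ioi 0)) (𝕜 := ℂ)
    refine Eq.trans ?_ this
    refine setIntegral_congr_fun measurableSet_Ioi (fun t ht => ?_)
    have he : ((s:ℂ) - 1) = ((s - 1 : ℝ) : ℂ) := by push_cast; ring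
    rw [he, ← Complex.ofReal_cpow (le_of_lt ht)]
    norm_cast
  rw [hIeq] at h1
  have h2 : HasDerivAt Complex.Gamma
      (((∫ t in Ioi (0:ℝ), t ^ (s - 1) * (Real.log t * Real.exp (-t)) : ℝ) : ℂ)) (s:ℂ) := by
    refine h1.congr_of_eventuallyEq ?_
    have hopen : IsOpen {z : ℂ | 0 < z.re} := isOpen_lt continuous_const Complex.continuous_re
    filter_upwards [hopen.mem_nhds hsc] with z hz
    exact Complex.Gamma_eq_integral hz
  have h3 := h2.real_of_complex
  have h4 : HasDerivAt Real.Gamma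
      (∫ t in Ioi (0:ℝ), t ^ (s - 1) * (Real.log t * Real.exp (-t))) s := by
    simpa [Complex.Gamma_ofReal] using h3
  exact h4.log (Real.Gamma_pos_of_pos hs).ne'

lemma abs_log_le (u : ℝ) (hu : 0 < u) : |Real.log u| ≤ 4 * (u ^ (4⁻¹:ℝ) + u ^ (-(4⁻¹:ℝ))) := by
  have h1 : (0:ℝ) < u ^ (4⁻¹:ℝ) := rpow_pos_of_pos hu _
  have h2 : (0:ℝ) < u ^ (-(4⁻¹:ℝ)) := rpow_pos_of_pos hu _
  rcases le_or_gt 1 u with h | h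
  · have hlog : 0 ≤ Real.log u := log_nonneg h
    rw [abs_of_nonneg hlog]
    have := Real.log_le_rpow_div hu.le (by norm_num : (0:ℝ) < 4⁻¹)
    calc Real.log u ≤ u ^ (4⁻¹:ℝ) / 4⁻¹ := this
      _ = 4 * u ^ (4⁻¹:ℝ) := by ring
      _ ≤ 4 * (u ^ (4⁻¹:ℝ) + u ^ (-(4⁻¹:ℝ))) := by nlinarith
  · have hlog : Real.log u ≤ 0 := log_nonpos hu.le h.le
    rw [abs_of_nonpos hlog]
    have hinv : (0:ℝ) < u⁻¹ := by positivity
    have := Real.log_le_rpow_div hinv.le (by norm_num : (0:ℝ) < 4⁻¹)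
    rw [log_inv] at this
    have hr : (u⁻¹) ^ (4⁻¹:ℝ) = u ^ (-(4⁻¹:ℝ)) := by
      rw [Real.inv_rpow hu.le, ← Real.rpow_neg hu.le]
    calc -Real.log u ≤ (u⁻¹) ^ (4⁻¹:ℝ) / 4⁻¹ := this
      _ = 4 * u ^ (-(4⁻¹:ℝ)) := by rw [hr]; ring
      _ ≤ 4 * (u ^ (4⁻¹:ℝ) + u ^ (-(4⁻¹:ℝ))) := by nlinarith

lemma sq_log_le (u : ℝ) (hu : 0 < u) : (Real.log u)^2 ≤ 32 * (u ^ (2⁻¹:ℝ) + u ^ (-(2⁻¹:ℝ))) := by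
  have h := abs_log_le u hu
  set a := u ^ (4⁻¹:ℝ) with ha
  set b := u ^ (-(4⁻¹:ℝ)) with hb
  have h1 : (0:ℝ) < a := rpow_pos_of_pos hu _
  have h2 : (0:ℝ) < b := rpow_pos_of_pos hu _
  have hab : a * b = 1 := by
    rw [ha, hb, ← rpow_add hu]; norm_num
  have ha2 : a ^ 2 = u ^ (2⁻¹:ℝ) := by
    rw [ha, ← rpow_natCast, ← Real.rpow_mul hu.le]; norm_num
  have hb2 : b ^ 2 = u ^ (-(2⁻¹:ℝ)) := by
    rw [hb, ← rpow_natCast, ← Real.rpow_mul hu.le]; norm_num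
  have hsq : (Real.log u)^2 ≤ (4 * (a + b))^2 := by
    have := abs_nonneg (Real.log u)
    nlinarith [sq_abs (Real.log u)]
  calc (Real.log u)^2 ≤ (4*(a+b))^2 := hsq
    _ = 16*(a^2 + 2*(a*b) + b^2) := by ring
    _ ≤ 32*(a^2 + b^2) := by nlinarith [sq_nonneg (a-b)]
    _ = 32 * (u ^ (2⁻¹:ℝ) + u ^ (-(2⁻¹:ℝ))) := by rw [ha2, hb2]

lemma integrable_rpow_exp (s r : ℝ) (hs : -1 < s) (hr : 0 < r) :
    IntegrableOn (fun u : ℝ => u ^ s * Real.exp (-(r * u))) (Ioi 0) := by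
  have := integrableOn_rpow_mul_exp_neg_mul_rpow hs zero_lt_one hr
  refine this.congr_fun (fun u hu => ?_) measurableSet_Ioi
  beta_reduce
  rw [Real.rpow_one, neg_mul]

lemma integrable_gamma_weight (s r e C : ℝ) (hr : 0 < r) (he : 0 < e) (hes : e < s)
    (w : ℝ → ℝ) (hw : Measurable w)
    (hbd : ∀ u ∈ Ioi (0:ℝ), |w u| ≤ C * (u ^ e + u ^ (-e))) :
    IntegrableOn (fun u : ℝ => u ^ (s - 1) * Real.exp (-(r * u)) * w u) (Ioi 0) := by
  have hg : IntegrableOn (fun u : ℝ =>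
      C * (u ^ (s - 1 + e) * Real.exp (-(r * u)) + u ^ (s - 1 - e) * Real.exp (-(r * u))))
      (Ioi 0) := by
    refine (Integrable.add ?_ ?_).const_mul C
    · exact integrable_rpow_exp _ r (by linarith) hr
    · exact integrable_rpow_exp _ r (by linarith) hr
  refine Integrable.mono' hg ?_ ?_
  · exact (((measurable_id.pow_const _).mul
      ((measurable_id.const_mul r).neg.exp)).mul hw).aestronglyMeasurable.restrict
  · filter_upwards [ae_restrict_mem measurableSet_Ioi] with u hu
    have hu' : (0:ℝ) < u := hu
    have hC : 0 ≤ C := by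
      have := hbd u hu
      have h1 : (0:ℝ) < u ^ e + u ^ (-e) := by positivity
      nlinarith [abs_nonneg (w u)]
    have h1 : 0 < u ^ (s-1) := rpow_pos_of_pos hu' _
    have h2 : 0 < Real.exp (-(r*u)) := exp_pos _
    rw [norm_mul, norm_mul, norm_of_nonneg h1.le, norm_of_nonneg h2.le]
    calc u ^ (s-1) * Real.exp (-(r*u)) * ‖w u‖
        ≤ u ^ (s-1) * Real.exp (-(r*u)) * (C * (u ^ e + u ^ (-e))) := by
          exact mul_le_mul_of_nonneg_left (hbd u hu) (by positivity)
      _ = C * (u ^ (s-1) * u ^ e * Real.exp (-(r*u)) + u ^ (s-1) * u ^ (-e) * Real.exp (-(r*u))) := by ring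
      _ = C * (u ^ (s-1+e) * Real.exp (-(r*u)) + u ^ (s-1-e) * Real.exp (-(r*u))) := by
          rw [← rpow_add hu', ← rpow_add hu']; ring_nf

variable {a r : ℝ}

lemma gammaMeasure_eq (a r : ℝ) : gammaMeasure a r
    = volume.withDensity (fun u => ((gammaPDFReal a r u).toNNReal : ℝ≥0∞)) := rfl

lemma integrable_gamma_iff (ha : 0 < a) (hr : 0 < r) (g : ℝ → ℝ) :
    Integrable g (gammaMeasure a r) ↔
      Integrable (fun u => gammaPDFReal a r u * g u) volume := by
  rw [gammaMeasure_eq,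
    integrable_withDensity_iff_integrable_smul ((measurable_gammaPDFReal a r).real_toNNReal)]
  refine integrable_congr (ae_of_all _ (fun u => ?_))
  simp [NNReal.smul_def, Real.coe_toNNReal _ (gammaPDFReal_nonneg ha hr u)]

lemma integral_gamma (ha : 0 < a) (hr : 0 < r) (g : ℝ → ℝ) :
    ∫ u, g u ∂(gammaMeasure a r) = ∫ u, gammaPDFReal a r u * g u := by
  rw [gammaMeasure_eq,
    integral_withDensity_eq_integral_smul ((measurable_gammaPDFReal a r).real_toNNReal)]
  refine integral_congr_ae (ae_of_all _ (fun u => ?_))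
  simp [NNReal.smul_def, Real.coe_toNNReal _ (gammaPDFReal_nonneg ha hr u)]

lemma integral_gamma_Ioi (ha : 0 < a) (hr : 0 < r) (g : ℝ → ℝ) :
    ∫ u, g u ∂(gammaMeasure a r)
      = ∫ u in Ioi (0:ℝ), r ^ a / Gamma a * u ^ (a - 1) * exp (-(r * u)) * g u := by
  rw [integral_gamma ha hr]
  rw [← integral_Ici_eq_integral_Ioi,
    ← setIntegral_eq_integral_of_forall_compl_eq_zero (s := Ici (0:ℝ))]
  · refine setIntegral_congr_fun measurableSet_Ici (fun u hu => ?_)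
    simp [gammaPDFReal, if_pos (mem_Ici.mp hu)]
  · intro u hu
    simp only [mem_Ici, not_le] at hu
    simp [gammaPDFReal, not_le.mpr hu]

lemma integrable_gamma_of_Ioi (ha : 0 < a) (hr : 0 < r) (g : ℝ → ℝ) (hg : Measurable g)
    (h : IntegrableOn (fun u => u ^ (a - 1) * exp (-(r * u)) * g u) (Ioi 0)) :
    Integrable g (gammaMeasure a r) := by
  rw [integrable_gamma_iff ha hr]
  have hind : (fun u => gammaPDFReal a r u * g u)
      = (Ici (0:ℝ)).indicator (fun u => gammaPDFReal a r u * g u) := by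
    ext u
    rcases le_or_gt 0 u with hu | hu
    · rw [indicator_of_mem (mem_Ici.mpr hu)]
    · rw [indicator_of_notMem (by simpa using hu)]
      simp [gammaPDFReal, not_le.mpr hu]
  rw [hind, integrable_indicator_iff measurableSet_Ici]
  rw [IntegrableOn, ← restrict_Ioi_eq_restrict_Ici]
  have : IntegrableOn (fun u => r ^ a / Gamma a * (u ^ (a - 1) * exp (-(r * u)) * g u)) (Ioi 0) :=
    h.const_mul _
  refine this.congr_fun (fun u hu => ?_) measurableSet_Ioi
  simp only [gammaPDFReal, if_pos (le_of_lt (mem_Ioi.mp hu))]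
  ring

lemma E_log (ν : ℝ) (hν : 1 ≤ ν) :
    ∫ u, Real.log u ∂(gammaMeasure ν ν)
      = (∫ t in Ioi (0:ℝ), t ^ (ν - 1) * (Real.log t * Real.exp (-t))) / Real.Gamma ν
        - Real.log ν := by
  have hν0 : 0 < ν := lt_of_lt_of_le one_pos hν
  have hΓ : 0 < Real.Gamma ν := Gamma_pos_of_pos hν0
  have hA : IntegrableOn (fun t : ℝ => t ^ (ν - 1) * exp (-t) * Real.log t) (Ioi 0) := by
    simpa using integrable_gamma_weight ν 1 4⁻¹ 4 one_pos (by norm_num) (by linarith)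
      Real.log measurable_log (fun u hu => abs_log_le u hu)
  have hB : IntegrableOn (fun t : ℝ => t ^ (ν - 1) * exp (-t)) (Ioi 0) := by
    simpa using integrable_rpow_exp (ν - 1) 1 (by linarith) one_pos
  have hGam : ∫ t in Ioi (0:ℝ), t ^ (ν - 1) * exp (-t) = Real.Gamma ν := by
    rw [Real.Gamma_eq_integral hν0]
    exact setIntegral_congr_fun measurableSet_Ioi fun t ht => by ring
  have hpow : ν ^ ν = ν * ν ^ (ν - 1) := by
    have h1 : ν ^ (ν - (ν - 1)) = ν ^ ν / ν ^ (ν - 1) := Real.rpow_sub hν0 ν (ν - 1)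
    have h2 : ν - (ν - 1) = 1 := by ring
    rw [h2, Real.rpow_one] at h1
    field_simp at h1 ⊢
    linarith [h1]
  calc ∫ u, Real.log u ∂(gammaMeasure ν ν)
      = ∫ u in Ioi (0:ℝ), ν ^ ν / Gamma ν * u ^ (ν - 1) * exp (-(ν * u)) * Real.log u :=
        integral_gamma_Ioi hν0 hν0 _
    _ = ∫ u in Ioi (0:ℝ),
          (fun t => ν ^ ν / Gamma ν * (t / ν) ^ (ν - 1) * exp (-t) * Real.log (t / ν)) (ν * u) := by
        refine setIntegral_congr_fun measurableSet_Ioi fun u hu => ?_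
        simp only [mul_div_cancel_left₀ _ hν0.ne']
    _ = ν⁻¹ • ∫ t in Ioi (ν * 0),
          ν ^ ν / Gamma ν * (t / ν) ^ (ν - 1) * exp (-t) * Real.log (t / ν) :=
        integral_comp_mul_left_Ioi
          (fun t => ν ^ ν / Gamma ν * (t / ν) ^ (ν - 1) * exp (-t) * Real.log (t / ν)) 0 hν0
    _ = ∫ t in Ioi (0:ℝ),
          ν⁻¹ * (ν ^ ν / Gamma ν * (t / ν) ^ (ν - 1) * exp (-t) * Real.log (t / ν)) := by
        rw [mul_zero, smul_eq_mul, ← integral_const_mul]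
    _ = ∫ t in Ioi (0:ℝ),
          ((1 / Gamma ν) * (t ^ (ν - 1) * exp (-t) * Real.log t)
            - (Real.log ν / Gamma ν) * (t ^ (ν - 1) * exp (-t))) := by
        refine setIntegral_congr_fun measurableSet_Ioi fun t ht => ?_
        have ht0 : (0:ℝ) < t := ht
        rw [Real.log_div ht0.ne' hν0.ne', Real.div_rpow ht0.le hν0.le, hpow]
        have hνp : (0:ℝ) < ν ^ (ν - 1) := rpow_pos_of_pos hν0 _
        field_simp
    _ = (1 / Gamma ν) * (∫ t in Ioi (0:ℝ), t ^ (ν - 1) * exp (-t) * Real.log t)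
          - (Real.log ν / Gamma ν) * (∫ t in Ioi (0:ℝ), t ^ (ν - 1) * exp (-t)) := by
        rw [integral_sub (hA.const_mul _) (hB.const_mul _), integral_const_mul, integral_const_mul]
    _ = (∫ t in Ioi (0:ℝ), t ^ (ν - 1) * (Real.log t * Real.exp (-t))) / Real.Gamma ν
          - Real.log ν := by
        rw [hGam]
        have : (∫ t in Ioi (0:ℝ), t ^ (ν - 1) * exp (-t) * Real.log t)
            = ∫ t in Ioi (0:ℝ), t ^ (ν - 1) * (Real.log t * Real.exp (-t)) := by
          exact setIntegral_congr_fun measurableSet_Ioi fun t ht => by ring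
        rw [this]
        field_simp

/-- The optimal equivariant estimator of the exponential scale parameter under the loss
`γ(θ, a) = |ln θ - ln a|²` is `δ(x) = x · exp(ln n - ψ(n))`: the expected fiducial loss
`a ↦ ∫ (ln θ - ln a)² dF(θ)`, where `F` is the fiducial distribution (the law of `x / U` with
`U ∼ Gamma(shape n, rate n)`), attains its unique minimum on `(0, ∞)` at this point. -/
theorem optimal_estimator_exponential_scale (n : ℕ) (hn : 1 ≤ n) (x : ℝ) (hx : 0 < x) :
    ∀ F : Measure ℝ, F = Measure.map (fun u : ℝ => x / u) (gammaMeasure n n) →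
    ∀ d : ℝ, d = x * Real.exp (Real.log n - deriv (fun t : ℝ => Real.log (Real.Gamma t)) n) →
      d ∈ Set.Ioi (0 : ℝ) ∧
      ∀ a ∈ Set.Ioi (0 : ℝ), a ≠ d →
        ∫ θ, (Real.log θ - Real.log d) ^ 2 ∂F < ∫ θ, (Real.log θ - Real.log a) ^ 2 ∂F := by
  intro F hF d hd
  set ν : ℝ := (n : ℝ) with hνdef
  have hν1 : (1:ℝ) ≤ ν := by rw [hνdef]; exact_mod_cast hn
  have hν0 : (0:ℝ) < ν := lt_of_lt_of_le one_pos hν1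
  set μ := gammaMeasure ν ν with hμdef
  haveI : IsProbabilityMeasure μ := isProbabilityMeasure_gammaMeasure hν0 hν0
  -- the value of psi
  set ψ : ℝ := deriv (fun t : ℝ => Real.log (Real.Gamma t)) ν with hψdef
  have hψ : ψ = (∫ t in Ioi (0:ℝ), t ^ (ν - 1) * (Real.log t * Real.exp (-t))) / Real.Gamma ν :=
    (psi_eq ν hν0).deriv
  -- integrability of log and log²
  have Hlog : Integrable Real.log μ := by
    refine integrable_gamma_of_Ioi hν0 hν0 _ measurable_log ?_
    exact integrable_gamma_weight ν ν 4⁻¹ 4 hν0 (by norm_num) (by linarith) _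
      measurable_log (fun u hu => abs_log_le u hu)
  have Hlog2 : Integrable (fun u => (Real.log u)^2) μ := by
    refine integrable_gamma_of_Ioi hν0 hν0 _ (measurable_log.pow_const 2) ?_
    refine integrable_gamma_weight ν ν 2⁻¹ 32 hν0 (by norm_num) (by linarith) _
      (measurable_log.pow_const 2) (fun u hu => ?_)
    rw [abs_of_nonneg (sq_nonneg _)]
    exact sq_log_le u hu
  -- the mean of L u = log x - log u
  set L : ℝ → ℝ := fun u => Real.log x - Real.log u with hLdef
  have HL : Integrable L μ := (integrable_const _).sub Hlog
  set m : ℝ := ∫ u, L u ∂μ with hmdef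
  have hm : m = Real.log x - (ψ - Real.log ν) := by
    rw [hmdef, hLdef]
    rw [integral_sub (integrable_const _) Hlog, integral_const, probReal_univ, E_log ν hν1, hψ]
    simp
  -- d is positive and log d = m
  have hd0 : 0 < d := by rw [hd]; positivity
  have hlogd : Real.log d = m := by
    rw [hd, Real.log_mul hx.ne' (Real.exp_ne_zero _), Real.log_exp, hm]
    push_cast [hνdef]
    ring
  -- integrability of (L - c)^2 for all c
  have hintc : ∀ c : ℝ, Integrable (fun u => (L u - c)^2) μ := by
    intro c
    have he : (fun u => (L u - c)^2)
        = fun u => (Real.log u)^2 - (2*(Real.log x - c))*(Real.log u) + (Real.log x - c)^2 := by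
      funext u; rw [hLdef]; ring
    rw [he]
    exact (Hlog2.sub (Hlog.const_mul _)).add (integrable_const _)
  -- mean of L - m is zero
  have hzero : ∫ u, (L u - m) ∂μ = 0 := by
    rw [integral_sub HL (integrable_const _), integral_const, probReal_univ]
    simp [hmdef]
  -- quadratic decomposition
  have key : ∀ c : ℝ, ∫ u, (L u - c)^2 ∂μ = (∫ u, (L u - m)^2 ∂μ) + (m - c)^2 := by
    intro c
    have he : (fun u => (L u - c)^2)
        = fun u => ((L u - m)^2 + (2*(m-c))*(L u - m)) + (m-c)^2 := by
      funext u; ring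
    rw [he]
    have i1 : Integrable (fun u => L u - m) μ := HL.sub (integrable_const m)
    have i2 : Integrable (fun u => 2*(m-c) * (L u - m)) μ := i1.const_mul _
    have i3 : Integrable (fun u => (L u - m)^2 + 2*(m-c) * (L u - m)) μ := (hintc m).add i2
    rw [integral_add i3 (integrable_const _), integral_add (hintc m) i2,
      integral_const_mul, hzero, integral_const, probReal_univ]
    simp
  -- transfer the pushforward integral
  have hmap : ∀ c : ℝ, ∫ θ, (Real.log θ - c)^2 ∂F = ∫ u, (L u - c)^2 ∂μ := by
    intro c
    rw [hF]
    rw [integral_map ((show Measurable fun u : ℝ => x / u from measurable_const.div measurable_id').aemeasurable)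
      ((show Measurable fun θ : ℝ => (Real.log θ - c)^2 from (measurable_log.sub measurable_const).pow_const 2).aestronglyMeasurable)]
    refine integral_congr_ae ?_
    have h0 : ∀ᵐ u ∂μ, u ≠ 0 := by
      have hac : μ ≪ volume := withDensity_absolutelyContinuous _ _
      have : volume ({(0:ℝ)} : Set ℝ) = 0 := volume_singleton
      have hμ0 : μ ({(0:ℝ)} : Set ℝ) = 0 := hac this
      rw [ae_iff]
      convert hμ0 using 2
      ext u
      simp
    filter_upwards [h0] with u hu
    rw [hLdef]
    simp only []
    rw [Real.log_div hx.ne' hu]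
  refine ⟨hd0, fun a ha had => ?_⟩
  rw [hmap, hmap, key (Real.log d), key (Real.log a), hlogd]
  have hla : Real.log a ≠ m := by
    intro h
    apply had
    rw [← Real.exp_log (mem_Ioi.mp ha), h, ← hlogd, Real.exp_log hd0]
  have : 0 < (m - Real.log a)^2 := pow_two_pos_of_ne_zero (sub_ne_zero.mpr (Ne.symm hla))
  have h0 : (m - m)^2 = 0 := by ring
  linarith
end

section
/- Let c : ℝ → L²(ℝ) be the curve c(θ) = 1_{(θ,θ+1)} (the equivalence class of the indicator of (θ, θ+1)). Then for all real θ₁ < θ₂ and every positive integer n, the total variation (length) of c on the interval [θ₁, θ₂] is at least 2√n · √(θ₂ − θ₁); consequently the length of c on [θ₁, θ₂] is infinite (the variation equals +∞), even though c is continuous. -/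
open MeasureTheory
open scoped ENNReal

private lemma inner_ind_aux (A B : Set ℝ) (hA : MeasurableSet A) (hB : MeasurableSet B)
    (f g : Lp ℝ 2 (volume : Measure ℝ))
    (hf : (f : ℝ → ℝ) =ᵐ[volume] A.indicator fun _ => 1)
    (hg : (g : ℝ → ℝ) =ᵐ[volume] B.indicator fun _ => 1) :
    (inner ℝ f g : ℝ) = (volume (A ∩ B)).toReal := by
  rw [MeasureTheory.L2.inner_def]
  have : ∫ x, (inner ℝ (f x) (g x) : ℝ) ∂volume
      = ∫ x, (A ∩ B).indicator (fun _ => (1:ℝ)) x ∂volume := by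
    apply integral_congr_ae
    filter_upwards [hf, hg] with x hfx hgx
    rw [RCLike.inner_apply, hfx, hgx]
    by_cases h1 : x ∈ A <;> by_cases h2 : x ∈ B <;> simp [h1, h2]
  rw [this]
  have := MeasureTheory.integral_indicator_one (hA.inter hB) (μ := volume)
  exact this

private lemma dist_eq_aux (c : ℝ → Lp ℝ 2 (volume : Measure ℝ))
    (hc : ∀ θ : ℝ, (c θ : ℝ → ℝ) =ᵐ[volume]
      (Set.Ioo θ (θ + 1)).indicator fun _ => (1 : ℝ))
    (s t : ℝ) (hst : s ≤ t) (h1 : t ≤ s + 1) :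
    dist (c s) (c t) = Real.sqrt (2 * (t - s)) := by
  have key : ∀ a b : ℝ, (inner ℝ (c a) (c b) : ℝ) =
      (volume (Set.Ioo a (a+1) ∩ Set.Ioo b (b+1))).toReal := fun a b =>
    inner_ind_aux _ _ measurableSet_Ioo measurableSet_Ioo _ _ (hc a) (hc b)
  have hsq : dist (c s) (c t) ^ 2 = 2 * (t - s) := by
    rw [dist_eq_norm, ← real_inner_self_eq_norm_sq, inner_sub_sub_self,
      key s s, key s t, key t t, real_inner_comm (c s) (c t), key s t,
      Set.Ioo_inter_Ioo, Set.Ioo_inter_Ioo, Set.Ioo_inter_Ioo]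
    simp only [sup_idem, inf_idem, sup_of_le_right hst,
      inf_of_le_left (by linarith : s + 1 ≤ t + 1)]
    simp only [Real.volume_Ioo]
    rw [ENNReal.toReal_ofReal (by linarith : (0:ℝ) ≤ s + 1 - s),
      ENNReal.toReal_ofReal (by linarith : (0:ℝ) ≤ s + 1 - t),
      ENNReal.toReal_ofReal (by linarith : (0:ℝ) ≤ t + 1 - t)]
    ring
  have hd : 0 ≤ dist (c s) (c t) := dist_nonneg
  nlinarith [Real.sq_sqrt (by linarith : (0:ℝ) ≤ 2 * (t - s)),
    Real.sqrt_nonneg (2 * (t - s)), hd]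

private lemma dist_eq_aux' (c : ℝ → Lp ℝ 2 (volume : Measure ℝ))
    (hc : ∀ θ : ℝ, (c θ : ℝ → ℝ) =ᵐ[volume]
      (Set.Ioo θ (θ + 1)).indicator fun _ => (1 : ℝ))
    (s t : ℝ) (h1 : |t - s| ≤ 1) :
    dist (c s) (c t) = Real.sqrt (2 * |t - s|) := by
  rcases le_total s t with h | h
  · rw [abs_of_nonneg (by linarith)] at *
    exact dist_eq_aux c hc s t h (by linarith)
  · rw [abs_of_nonpos (by linarith)] at *
    rw [dist_comm]
    rw [dist_eq_aux c hc t s h (by linarith)]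
    ring_nf

/-- The curve `θ ↦ 1_{(θ,θ+1)}` in `L²(ℝ)` is continuous, but on any interval `[θ₁, θ₂]` its
length (total variation) is at least `2 √n √(θ₂ - θ₁)` for every positive integer `n`, hence
infinite. -/
theorem uniform_location_curve_infinite_length
    (c : ℝ → Lp ℝ 2 (volume : Measure ℝ))
    (hc : ∀ θ : ℝ, (c θ : ℝ → ℝ) =ᵐ[volume]
      (Set.Ioo θ (θ + 1)).indicator fun _ => (1 : ℝ)) :
    Continuous c ∧
      ∀ θ₁ θ₂ : ℝ, θ₁ < θ₂ →
        (∀ n : ℕ, 0 < n →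
          ENNReal.ofReal (2 * Real.sqrt n * Real.sqrt (θ₂ - θ₁)) ≤
            eVariationOn c (Set.Icc θ₁ θ₂)) ∧
        eVariationOn c (Set.Icc θ₁ θ₂) = ⊤ := by
  constructor
  · -- continuity
    rw [Metric.continuous_iff]
    intro b ε hε
    refine ⟨min 1 (ε ^ 2 / 2), by positivity, fun a ha => ?_⟩
    have hab : |a - b| < min 1 (ε ^ 2 / 2) := by rwa [Real.dist_eq] at ha
    have h1 : |a - b| ≤ 1 := le_of_lt (lt_of_lt_of_le hab (min_le_left _ _))
    rw [dist_comm, dist_eq_aux' c hc b a h1]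
    have h2 : 2 * |a - b| < ε ^ 2 := by
      have := lt_of_lt_of_le hab (min_le_right _ _); linarith
    calc Real.sqrt (2 * |a - b|) < Real.sqrt (ε ^ 2) :=
          Real.sqrt_lt_sqrt (by positivity) h2
      _ = ε := Real.sqrt_sq hε.le
  · intro θ₁ θ₂ hθ
    set Δ := θ₂ - θ₁ with hΔdef
    have hΔ : 0 < Δ := by simp [hΔdef]; linarith
    have hlow : ∀ n : ℕ, 0 < n →
        ENNReal.ofReal (2 * Real.sqrt n * Real.sqrt Δ) ≤
          eVariationOn c (Set.Icc θ₁ θ₂) := by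
      intro n hn
      set m : ℕ := 2 * n * ⌈Δ⌉₊ with hmdef
      have hceil : 1 ≤ ⌈Δ⌉₊ := Nat.one_le_ceil_iff.mpr hΔ
      have hm : 0 < m := by positivity
      have hM : (0:ℝ) < m := by exact_mod_cast hm
      set h : ℝ := Δ / m with hhdef
      have hh : 0 < h := by positivity
      have hh1 : h ≤ 1 := by
        rw [hhdef, div_le_one hM]
        calc Δ ≤ (⌈Δ⌉₊ : ℝ) := Nat.le_ceil Δ
          _ ≤ (m : ℝ) := by
              have : ⌈Δ⌉₊ ≤ m := by
                rw [hmdef]; nlinarith [hn, hceil]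
              exact_mod_cast this
      set u : ℕ → ℝ := fun i => θ₁ + (min i m : ℕ) * h with hudef
      have hmono : Monotone u := by
        intro i j hij
        simp only [hudef]
        have : (min i m : ℕ) ≤ (min j m : ℕ) := min_le_min hij le_rfl
        have : ((min i m : ℕ) : ℝ) ≤ ((min j m : ℕ) : ℝ) := by exact_mod_cast this
        nlinarith
      have hmem : ∀ i, u i ∈ Set.Icc θ₁ θ₂ := by
        intro i
        simp only [hudef, Set.mem_Icc]
        have h0 : (0:ℝ) ≤ (min i m : ℕ) := Nat.cast_nonneg _
        have hle : ((min i m : ℕ) : ℝ) ≤ (m : ℝ) := by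
          exact_mod_cast min_le_right i m
        constructor
        · nlinarith
        · have : ((min i m : ℕ) : ℝ) * h ≤ m * h := by nlinarith
          have hmh : (m : ℝ) * h = Δ := by
            rw [hhdef]; field_simp
          simp only [hΔdef] at hmh ⊢
          nlinarith
      have hsum := eVariationOn.sum_le (f := c) (n := m) hmono hmem
      have hterm : ∀ i ∈ Finset.range m,
          edist (c (u (i + 1))) (c (u i)) = ENNReal.ofReal (Real.sqrt (2 * h)) := by
        intro i hi
        rw [Finset.mem_range] at hi
        have hui : u (i + 1) - u i = h := by
          simp only [hudef]
          rw [min_eq_left (by omega : i + 1 ≤ m), min_eq_left (by omega : i ≤ m)]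
          push_cast
          ring
        rw [edist_dist, dist_comm, dist_eq_aux c hc (u i) (u (i+1))
          (by linarith [hmono (Nat.le_succ i)]) (by linarith)]
        rw [hui]
      rw [Finset.sum_congr rfl hterm, Finset.sum_const, Finset.card_range,
        nsmul_eq_mul] at hsum
      refine le_trans ?_ hsum
      have : (m : ℝ≥0∞) * ENNReal.ofReal (Real.sqrt (2 * h))
          = ENNReal.ofReal (m * Real.sqrt (2 * h)) := by
        rw [ENNReal.ofReal_mul (by positivity)]
        simp
      rw [this]
      apply ENNReal.ofReal_le_ofReal
      -- real inequality: 2 √n √Δ ≤ m √(2h)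
      have e1 : 2 * Real.sqrt n * Real.sqrt Δ = Real.sqrt (4 * n * Δ) := by
        rw [show (4:ℝ) * n * Δ = (2 * Real.sqrt n * Real.sqrt Δ) ^ 2 by
          have := Real.sq_sqrt (Nat.cast_nonneg n : (0:ℝ) ≤ n)
          have := Real.sq_sqrt hΔ.le
          nlinarith]
        exact (Real.sqrt_sq (by positivity : (0:ℝ) ≤ 2 * Real.sqrt n * Real.sqrt Δ)).symm
      have e2 : (m : ℝ) * Real.sqrt (2 * h) = Real.sqrt (2 * m * Δ) := by
        have hs : Real.sqrt (2 * h) ^ 2 = 2 * h := Real.sq_sqrt (by linarith)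
        have hmh : (m : ℝ) * h = Δ := by rw [hhdef]; field_simp
        rw [show (2:ℝ) * m * Δ = ((m:ℝ) * Real.sqrt (2 * h)) ^ 2 by
          rw [mul_pow, hs]; linear_combination (-2*(m:ℝ)) * hmh]
        exact (Real.sqrt_sq (mul_nonneg (Nat.cast_nonneg m) (Real.sqrt_nonneg _))).symm
      rw [e1, e2]
      apply Real.sqrt_le_sqrt
      have h2n : 2 * (n:ℝ) ≤ (m:ℝ) := by
        have : 2 * n ≤ m := by rw [hmdef]; nlinarith [hceil]
        exact_mod_cast this
      nlinarith
    refine ⟨hlow, ?_⟩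
    by_contra hne
    have hVlt : eVariationOn c (Set.Icc θ₁ θ₂) ≠ ⊤ := hne
    set r : ℝ := (eVariationOn c (Set.Icc θ₁ θ₂)).toReal with hr
    obtain ⟨n, hnn⟩ := exists_nat_gt ((r / (2 * Real.sqrt Δ)) ^ 2)
    have hn0 : 0 < n + 1 := Nat.succ_pos n
    have hle := (ENNReal.ofReal_le_iff_le_toReal hVlt).mp (hlow (n+1) hn0)
    have hsΔ : 0 < Real.sqrt Δ := Real.sqrt_pos.mpr hΔ
    have hgt : r / (2 * Real.sqrt Δ) < Real.sqrt (n+1) := by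
      have h1 : ((r / (2 * Real.sqrt Δ)) ^ 2) < ((n:ℝ) + 1) := by
        have : (n:ℝ) < (n:ℝ) + 1 := by linarith
        linarith
      calc r / (2 * Real.sqrt Δ) ≤ |r / (2 * Real.sqrt Δ)| := le_abs_self _
        _ = Real.sqrt ((r / (2 * Real.sqrt Δ)) ^ 2) := (Real.sqrt_sq_eq_abs _).symm
        _ < Real.sqrt ((n:ℝ) + 1) := Real.sqrt_lt_sqrt (by positivity) h1
    have : r < 2 * Real.sqrt ((n:ℝ)+1) * Real.sqrt Δ := by
      have := mul_lt_mul_of_pos_right hgt (by positivity : (0:ℝ) < 2 * Real.sqrt Δ)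
      rw [div_mul_cancel₀ r (by positivity : (2 * Real.sqrt Δ) ≠ 0)] at this
      linarith [this]
    have hcast : Real.sqrt ((n+1 : ℕ) : ℝ) = Real.sqrt ((n:ℝ)+1) := by push_cast; ring_nf
    rw [hcast] at hle
    linarith
end

section
/- Let n ≥ 1 be an integer and x > 0. Consider the Bayesian posterior for the exponential scale parameter β from the right Haar prior dβ/β given the observed mean x, i.e. the probability measure on (0, ∞) with density proportional to β ↦ β^{−1} · ((n/β)^n / Γ(n)) · x^{n−1} e^{−n x / β} (prior density 1/β times the Gamma(shape n, rate n/β) likelihood of x). This posterior equals the fiducial distribution: the pushforward of the Gamma distribution with shape n and rate n under the map u ↦ x/u, namely the inverse-gamma distribution with density β ↦ ((n x)^n / Γ(n)) β^{−n−1} e^{−n x / β}. -/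
open MeasureTheory ProbabilityTheory

private lemma invgamma_cov (n x β : ℝ) (hn : 0 < n) (hx : 0 < x) (hβ : 0 < β) :
    x / β ^ 2 * (n ^ n / Real.Gamma n * (x / β) ^ (n - 1) * Real.exp (-(n * (x / β)))) =
      (n * x) ^ n / Real.Gamma n * β ^ (-n - 1) * Real.exp (-(n * x) / β) := by
  have hΓ := Real.Gamma_pos_of_pos hn
  have hexp : -(n * (x / β)) = -(n * x) / β := by field_simp
  have hβn := (Real.rpow_pos_of_pos hβ n).ne'
  have hxn := (Real.rpow_pos_of_pos hx n).ne'
  rw [hexp, Real.mul_rpow hn.le hx.le, Real.div_rpow hx.le hβ.le,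
      Real.rpow_sub hx, Real.rpow_one, Real.rpow_sub hβ, Real.rpow_one,
      show -n - 1 = -(n + 1) by ring, Real.rpow_neg hβ.le, Real.rpow_add hβ, Real.rpow_one]
  field_simp

private lemma g_eq_aux (n x β : ℝ) (hn : 0 < n) (hx : 0 < x) (hβ : 0 < β) :
    β⁻¹ * ((n / β) ^ n / Real.Gamma n * x ^ (n - 1) * Real.exp (-(n * x) / β)) =
      x⁻¹ * ((n * x) ^ n / Real.Gamma n * β ^ (-n - 1) * Real.exp (-(n * x) / β)) := by
  have hΓ := Real.Gamma_pos_of_pos hn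
  have hβn := (Real.rpow_pos_of_pos hβ n).ne'
  have hxn := (Real.rpow_pos_of_pos hx n).ne'
  rw [Real.mul_rpow hn.le hx.le, Real.div_rpow (le_of_lt hn) hβ.le,
      Real.rpow_sub hx, Real.rpow_one,
      show -n - 1 = -(n + 1) by ring, Real.rpow_neg hβ.le, Real.rpow_add hβ, Real.rpow_one]
  field_simp

/-- The Bayesian posterior for the exponential scale parameter `β` from the right Haar prior
`dβ/β`, given the observed mean `x` of a sample of size `n`, equals the fiducial
distribution: the law of `x / U` with `U ∼ Gamma(shape n, rate n)`, i.e. the inverse-gamma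
distribution with shape `n` and scale `n x`. -/
theorem haar_posterior_eq_fiducial_exponential (n : ℕ) (hn : 1 ≤ n) (x : ℝ) (hx : 0 < x)
    (g : ℝ → ℝ)
    (hg : g = fun β : ℝ =>
      if 0 < β then
        β⁻¹ * ((n / β) ^ (n : ℝ) / Real.Gamma n * x ^ ((n : ℝ) - 1) * Real.exp (-(n * x) / β))
      else 0)
    (posterior : Measure ℝ)
    (hposterior : posterior =
      volume.withDensity fun β : ℝ => ENNReal.ofReal (g β / ∫ b in Set.Ioi (0 : ℝ), g b)) :
    posterior = Measure.map (fun u : ℝ => x / u) (gammaMeasure n n) ∧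
      Measure.map (fun u : ℝ => x / u) (gammaMeasure n n) =
        volume.withDensity fun β : ℝ =>
          if 0 < β then
            ENNReal.ofReal ((n * x) ^ (n : ℝ) / Real.Gamma n *
              β ^ (-(n : ℝ) - 1) * Real.exp (-(n * x) / β))
          else 0 := by
  have hn0 : (0 : ℝ) < (n : ℝ) := by exact_mod_cast Nat.lt_of_lt_of_le Nat.zero_lt_one hn
  set νr : ℝ → ℝ := fun β : ℝ =>
    ((n : ℝ) * x) ^ (n : ℝ) / Real.Gamma n * β ^ (-(n : ℝ) - 1) * Real.exp (-((n : ℝ) * x) / β)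
    with hνr
  set ν : ℝ → ENNReal := fun β : ℝ => if 0 < β then ENNReal.ofReal (νr β) else 0 with hν
  have hνrpos : ∀ β : ℝ, 0 < β → 0 < νr β := by
    intro β hβ
    have h1 : 0 < ((n : ℝ) * x) ^ (n : ℝ) := Real.rpow_pos_of_pos (mul_pos hn0 hx) _
    have h2 : 0 < β ^ (-(n : ℝ) - 1) := Real.rpow_pos_of_pos hβ _
    positivity
  have hTmeas : Measurable fun u : ℝ => x / u := measurable_const.div measurable_id
  have hνind : ν = (Set.Ioi (0 : ℝ)).indicator fun β => ENNReal.ofReal (νr β) := by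
    funext β
    simp [hν, Set.indicator_apply]
  -- the main change-of-variables identity
  have hmap : Measure.map (fun u : ℝ => x / u) (gammaMeasure n n) = volume.withDensity ν := by
    ext s hs
    rw [Measure.map_apply hTmeas hs, gammaMeasure, withDensity_apply _ (hTmeas hs),
      withDensity_apply _ hs]
    -- a.e. identification of gammaPDF with its restriction to Ioi 0
    have hae : gammaPDF (n : ℝ) n =ᵐ[volume]
        (Set.Ioi (0 : ℝ)).indicator (gammaPDF (n : ℝ) n) := by
      rw [Filter.EventuallyEq, ae_iff]
      refine measure_mono_null (t := {(0:ℝ)}) (fun u hu => ?_) Real.volume_singleton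
      simp only [Set.mem_setOf_eq] at hu
      by_contra h0
      rcases lt_trichotomy u 0 with h | h | h
      · exact hu (by rw [gammaPDF_of_neg h, Set.indicator_of_notMem (by simp [h.le, not_lt.2])])
      · exact h0 h
      · exact hu (by rw [Set.indicator_of_mem (Set.mem_Ioi.2 h)])
    have hrestrict : ∀ A : Set ℝ, MeasurableSet A →
        ∫⁻ u in A, gammaPDF (n : ℝ) n u = ∫⁻ u in A ∩ Set.Ioi 0, gammaPDF (n : ℝ) n u := by
      intro A hA
      rw [lintegral_congr_ae (ae_restrict_of_ae hae),
        lintegral_indicator measurableSet_Ioi, Measure.restrict_restrict measurableSet_Ioi,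
        Set.inter_comm]
    have himg : ((fun u : ℝ => x / u) ⁻¹' s) ∩ Set.Ioi 0
        = (fun u : ℝ => x / u) '' (s ∩ Set.Ioi 0) := by
      ext u
      simp only [Set.mem_inter_iff, Set.mem_preimage, Set.mem_image, Set.mem_Ioi]
      constructor
      · rintro ⟨hus, hu⟩
        exact ⟨x / u, ⟨hus, div_pos hx hu⟩, by field_simp⟩
      · rintro ⟨β, ⟨hβs, hβ⟩, rfl⟩
        refine ⟨?_, div_pos hx hβ⟩
        rw [show x / (x / β) = β by field_simp]
        exact hβs
    have hs' : MeasurableSet (s ∩ Set.Ioi 0) := hs.inter measurableSet_Ioi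
    have hderiv : ∀ β ∈ s ∩ Set.Ioi (0 : ℝ),
        HasDerivWithinAt (fun u : ℝ => x / u) (-(x / β ^ 2)) (s ∩ Set.Ioi 0) β := by
      intro β hβ
      have h1 : HasDerivAt (fun u : ℝ => x / u) (-(x / β ^ 2)) β := by
        simpa [div_eq_mul_inv, mul_neg, neg_mul] using
          (hasDerivAt_inv (ne_of_gt hβ.2)).const_mul x
      exact h1.hasDerivWithinAt
    have hinj : Set.InjOn (fun u : ℝ => x / u) (s ∩ Set.Ioi 0) := by
      intro a ha b hb hab
      simp only at hab
      rw [div_eq_div_iff (ne_of_gt ha.2) (ne_of_gt hb.2)] at hab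
      exact (mul_left_cancel₀ hx.ne' hab).symm
    calc ∫⁻ u in (fun u : ℝ => x / u) ⁻¹' s, gammaPDF (n : ℝ) n u
        = ∫⁻ u in ((fun u : ℝ => x / u) ⁻¹' s) ∩ Set.Ioi 0, gammaPDF (n : ℝ) n u :=
          hrestrict _ (hTmeas hs)
      _ = ∫⁻ u in (fun u : ℝ => x / u) '' (s ∩ Set.Ioi 0), gammaPDF (n : ℝ) n u := by
          rw [himg]
      _ = ∫⁻ β in s ∩ Set.Ioi 0,
            ENNReal.ofReal |(-(x / β ^ 2))| * gammaPDF (n : ℝ) n (x / β) := by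
          simpa only [ContinuousLinearMap.det_toSpanSingleton] using
            lintegral_image_eq_lintegral_abs_det_fderiv_mul volume hs'
              (fun β hβ => (hderiv β hβ).hasFDerivWithinAt) hinj (gammaPDF (n : ℝ) n)
      _ = ∫⁻ β in s ∩ Set.Ioi 0, ENNReal.ofReal (νr β) := by
          refine setLIntegral_congr_fun hs' (fun β hβ => ?_)
          have hβ2 : (0 : ℝ) < β ^ 2 := pow_pos hβ.2 2
          rw [gammaPDF_of_nonneg (le_of_lt (div_pos hx hβ.2)),
            ← ENNReal.ofReal_mul (abs_nonneg _), abs_neg, abs_of_pos (div_pos hx hβ2)]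
          exact congrArg ENNReal.ofReal (invgamma_cov (n : ℝ) x β hn0 hx hβ.2)
      _ = ∫⁻ β in s, ν β := by
          rw [hνind, lintegral_indicator measurableSet_Ioi,
            Measure.restrict_restrict measurableSet_Ioi, Set.inter_comm]
  -- total mass: the lintegral of νr over Ioi 0 is 1
  have hprob : IsProbabilityMeasure (gammaMeasure (n : ℝ) n) := isProbabilityMeasure_gammaMeasure hn0 hn0
  have hlint : ∫⁻ β in Set.Ioi (0 : ℝ), ENNReal.ofReal (νr β) = 1 := by
    have h1 : (volume.withDensity ν) Set.univ = 1 := by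
      rw [← hmap, Measure.map_apply hTmeas MeasurableSet.univ]
      simp
    rw [withDensity_apply _ MeasurableSet.univ, Measure.restrict_univ, hνind,
      lintegral_indicator measurableSet_Ioi] at h1
    exact h1
  have hmeasνr : Measurable νr := by
    rw [hνr]; fun_prop
  have hint : ∫ β in Set.Ioi (0 : ℝ), νr β = 1 := by
    rw [integral_eq_lintegral_of_nonneg_ae
      ((ae_restrict_iff' measurableSet_Ioi).2 (ae_of_all _ fun β hβ =>
        (hνrpos β hβ).le))
      hmeasνr.aestronglyMeasurable.restrict]
    rw [hlint]; simp
  have hI : ∫ b in Set.Ioi (0 : ℝ), g b = x⁻¹ := by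
    have : ∫ b in Set.Ioi (0 : ℝ), g b = ∫ b in Set.Ioi (0 : ℝ), x⁻¹ * νr b := by
      refine setIntegral_congr_fun measurableSet_Ioi fun β hβ => ?_
      rw [hg]
      simp only [if_pos (Set.mem_Ioi.1 hβ)]
      exact g_eq_aux (n : ℝ) x β hn0 hx (Set.mem_Ioi.1 hβ)
    rw [this, integral_const_mul, hint, mul_one]
  refine ⟨?_, hmap⟩
  rw [hposterior, hmap]
  congr 1
  funext β
  rw [hI, hg]
  by_cases hβ : 0 < β
  · simp only [if_pos hβ, hν]
    rw [g_eq_aux (n : ℝ) x β hn0 hx hβ]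
    congr 1
    simp only [hνr]
    field_simp
  · simp [hν, if_neg hβ, hg]
end
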